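/- arXiv:2510.07948 — 2 statements merged into one kernel-verified Lean document; each statement's English description precedes it below -/
import Mathlib

section
/- Let N be a positive integer, let Θ be a set with a distinguished element θ₀, let a : Θ → ℂ^N be a map (the steering-vector parametrization), let Π⊥ be a Hermitian idempotent N×N complex matrix, and let d ∈ ℂ with d ≠ 0. Assume (i) Π⊥ a(θ) ≠ 0 for all θ ∈ Θ, and (ii) unambiguity: for all θ ∈ Θ, if Π⊥ a(θ) and Π⊥ a(θ₀) are ℂ-linearly dependent then θ = θ₀. Let y satisfy Π⊥ y = d·(Π⊥ a(θ₀)), and define P(θ) = |a(θ)ᴴ Π⊥ y|² / (a(θ)ᴴ Π⊥ a(θ)). Then P(θ) < P(θ₀) for every θ ∈ Θ with θ ≠ θ₀; that is, θ₀ is the unique maximizer of the noise-free criterion. -/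
open Matrix

noncomputable section

/-- Let `N` be a positive integer, `Θ` a set with a distinguished
element `θ₀`, `a : Θ → ℂ^N` a steering-vector parametrization, `Π⊥` a Hermitian
idempotent `N×N` complex matrix, and `d ∈ ℂ` with `d ≠ 0`. Assume (i) `Π⊥ a(θ) ≠ 0`
for all `θ`, and (ii) unambiguity: if `Π⊥ a(θ)` and `Π⊥ a(θ₀)` are `ℂ`-linearly
dependent then `θ = θ₀`. Let `y` satisfy `Π⊥ y = d·(Π⊥ a(θ₀))`, and define
`P(θ) = |a(θ)ᴴ Π⊥ y|² / (a(θ)ᴴ Π⊥ a(θ))`. Then `P(θ) < P(θ₀)` for every `θ ≠ θ₀`;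
that is, `θ₀` is the unique maximizer of the noise-free criterion. -/
theorem statement10 (N : ℕ) (hN : 0 < N) (Θ : Type*) (θ₀ : Θ)
    (a : Θ → Fin N → ℂ)
    (Piperp : Matrix (Fin N) (Fin N) ℂ)
    (hH : Piperp.IsHermitian) (hidem : Piperp * Piperp = Piperp)
    (d : ℂ) (hd : d ≠ 0)
    (hnz : ∀ θ : Θ, Piperp.mulVec (a θ) ≠ 0)
    (hunamb : ∀ θ : Θ,
      ¬ LinearIndependent ℂ ![Piperp.mulVec (a θ), Piperp.mulVec (a θ₀)] → θ = θ₀)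
    (y : Fin N → ℂ) (hy : Piperp.mulVec y = d • Piperp.mulVec (a θ₀)) :
    ∀ θ : Θ, θ ≠ θ₀ →
      ‖star (a θ) ⬝ᵥ Piperp.mulVec y‖ ^ 2 / (star (a θ) ⬝ᵥ Piperp.mulVec (a θ)).re
        < ‖star (a θ₀) ⬝ᵥ Piperp.mulVec y‖ ^ 2
            / (star (a θ₀) ⬝ᵥ Piperp.mulVec (a θ₀)).re := by
  intro θ hθ
  have idemv : ∀ v : Fin N → ℂ, Piperp.mulVec (Piperp.mulVec v) = Piperp.mulVec v := by
    intro v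
    rw [Matrix.mulVec_mulVec, hidem]
  have key : ∀ (θ' : Θ) (v : Fin N → ℂ),
      star (a θ') ⬝ᵥ Piperp.mulVec v = star (Piperp.mulVec (a θ')) ⬝ᵥ v := by
    intro θ' v
    rw [Matrix.star_mulVec, hH.eq, ← Matrix.dotProduct_mulVec]
  let U : EuclideanSpace ℂ (Fin N) := (WithLp.equiv 2 _).symm (Piperp.mulVec (a θ))
  let W : EuclideanSpace ℂ (Fin N) := (WithLp.equiv 2 _).symm (Piperp.mulVec (a θ₀))
  have hUnz : U ≠ 0 := fun h => hnz θ (congrArg WithLp.ofLp h)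
  have hWnz : W ≠ 0 := fun h => hnz θ₀ (congrArg WithLp.ofLp h)
  have hUpos : (0:ℝ) < ‖U‖ := norm_pos_iff.mpr hUnz
  have hWpos : (0:ℝ) < ‖W‖ := norm_pos_iff.mpr hWnz
  have hdpos : (0:ℝ) < ‖d‖ := norm_pos_iff.mpr hd
  have numL : star (a θ) ⬝ᵥ Piperp.mulVec y = d * (inner ℂ U W) := by
    rw [hy, dotProduct_smul, smul_eq_mul, ← idemv (a θ₀), key]
    rw [dotProduct_comm]; rfl
  have numR : star (a θ₀) ⬝ᵥ Piperp.mulVec y = d * (inner ℂ W W) := by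
    rw [hy, dotProduct_smul, smul_eq_mul, ← idemv (a θ₀), key]
    rw [dotProduct_comm]; rfl
  have denL : (star (a θ) ⬝ᵥ Piperp.mulVec (a θ)).re = ‖U‖ ^ 2 := by
    have h1 : star (a θ) ⬝ᵥ Piperp.mulVec (a θ) = (inner ℂ U U) := by
      rw [← idemv (a θ), key]; rw [dotProduct_comm]; rfl
    rw [h1]
    exact_mod_cast congrArg Complex.re (@inner_self_eq_norm_sq_to_K ℂ _ _ _ _ U)
  have denR : (star (a θ₀) ⬝ᵥ Piperp.mulVec (a θ₀)).re = ‖W‖ ^ 2 := by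
    have h1 : star (a θ₀) ⬝ᵥ Piperp.mulVec (a θ₀) = (inner ℂ W W) := by
      rw [← idemv (a θ₀), key]; rw [dotProduct_comm]; rfl
    rw [h1]
    exact_mod_cast congrArg Complex.re (@inner_self_eq_norm_sq_to_K ℂ _ _ _ _ W)
  have hindep : LinearIndependent ℂ ![Piperp.mulVec (a θ), Piperp.mulVec (a θ₀)] := by
    by_contra h
    exact hθ (hunamb θ h)
  have hcs : ‖(inner ℂ U W)‖ < ‖U‖ * ‖W‖ := by
    rcases lt_or_eq_of_le (norm_inner_le_norm (𝕜 := ℂ) U W) with h | h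
    · exact h
    · exfalso
      obtain ⟨r, hr, hrw⟩ := (norm_inner_eq_norm_iff hUnz hWnz).mp h
      have hw2 : Piperp.mulVec (a θ₀) = r • Piperp.mulVec (a θ) := congrArg WithLp.ofLp hrw
      have h2 := (linearIndependent_fin2.mp hindep).2 r⁻¹
      apply h2
      show r⁻¹ • Piperp.mulVec (a θ₀) = Piperp.mulVec (a θ)
      rw [hw2, smul_smul, inv_mul_cancel₀ hr, one_smul]
  rw [numL, numR, denL, denR, norm_mul, norm_mul]
  have hWW : ‖(inner ℂ W W)‖ = ‖W‖ ^ 2 := by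
    rw [@inner_self_eq_norm_sq_to_K ℂ]
    simp
  rw [hWW, div_lt_div_iff₀ (by positivity) (by positivity)]
  have hcs2 : ‖(inner ℂ U W)‖ ^ 2 < (‖U‖ * ‖W‖) ^ 2 := by
    have := norm_nonneg (inner ℂ U W)
    nlinarith
  nlinarith [sq_nonneg (‖d‖ * ‖W‖), mul_pos (mul_pos hdpos hdpos) (mul_pos hWpos hWpos),
    mul_pos hUpos hUpos, sq_nonneg ‖(inner ℂ U W)‖]
end
end

section
/- Let N and L be positive integers, let b, d ∈ ℂ, let v ∈ ℂ^N with |vᵢ| = 1 for every i, and let c ∈ ℂ^L. Let Z = [ b·I + d·diag(v) , cᵀ ⊗ I ] be the N×N(L+1) matrix as above, and let J : ℂ^{N+L} → ℂ^{N(L+1)} be the linear map sending u = (u_{-L},…,u_{N-1}) to the vectorization of the N×(L+1) matrix with (n,l)-entry u_{n−l}. Then the composite map Z∘J : ℂ^{N+L} → ℂ^N has squared operator norm at most (L+1)·((|b| + |d|)² + ‖c‖²), and hence at most (L+1)·(2|b|² + 2|d|² + ‖c‖²). -/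
open Matrix Kronecker

noncomputable section

/-- The index (into the sample vector `u = (u₋L, …, u_{N−1})`, stored with offset
`L`) of the entry of `vec(S_I)` at position `idx`: the left block `Fin N` is column
`l = 0` (entries `u_n`), and position `(l, n) : Fin L × Fin N` in the right block is
column `l + 1` (entries `u_{n−(l+1)}`). -/
def colIndex (N L : ℕ) : (Fin N ⊕ Fin L × Fin N) → Fin (N + L) :=
  Sum.elim (fun n => ⟨n.val + L, by omega⟩)
    (fun p => ⟨p.2.val + L - (p.1.val + 1), by omega⟩)

/-- The selection map `J` of the paper, as a linear map from the illuminator sample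
vector `u ∈ ℂ^{N+L}` to the vectorization `vec(S_I) ∈ ℂ^{N(L+1)}` of the `N×(L+1)`
Toeplitz-type matrix with `(n,l)`-entry `u_{n−l}`. -/
def Jmap (N L : ℕ) : EuclideanSpace ℂ (Fin (N + L)) →ₗ[ℂ]
    EuclideanSpace ℂ (Fin N ⊕ Fin L × Fin N) where
  toFun u := WithLp.toLp 2 (fun idx => u (colIndex N L idx))
  map_add' _ _ := rfl
  map_smul' _ _ := rfl

lemma eucl_norm_sq {ι} [Fintype ι] (x : EuclideanSpace ℂ ι) :
    ‖x‖ ^ 2 = ∑ i, ‖x i‖ ^ 2 := by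
  rw [EuclideanSpace.norm_eq, Real.sq_sqrt]
  positivity

lemma sum_comp_le {α β} [Fintype α] [Fintype β] [DecidableEq β] (g : α → β)
    (hg : Function.Injective g) (F : β → ℝ) (hF : ∀ b, 0 ≤ F b) :
    ∑ a, F (g a) ≤ ∑ b, F b := by
  rw [← Finset.sum_image (fun x _ y _ h => hg h)]
  exact Finset.sum_le_sum_of_subset_of_nonneg (Finset.subset_univ _) (fun _ _ _ => hF _)

set_option maxHeartbeats 1000000 in
/-- Let `N, L` be positive integers, `b, d ∈ ℂ`, `v ∈ ℂ^N` with
`|vᵢ| = 1` for every `i`, and `c ∈ ℂ^L`. Let `Z = [ b·I + d·diag(v) , cᵀ ⊗ I ]` be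
the `N×N(L+1)` matrix and `J : ℂ^{N+L} → ℂ^{N(L+1)}` the linear map sending
`u = (u₋L,…,u_{N−1})` to the vectorization of the `N×(L+1)` matrix with
`(n,l)`-entry `u_{n−l}`. Then the composite `Z∘J : ℂ^{N+L} → ℂ^N` has squared
operator norm at most `(L+1)·((|b| + |d|)² + ‖c‖²)`, and hence at most
`(L+1)·(2|b|² + 2|d|² + ‖c‖²)`. -/
theorem statement14 (N L : ℕ) (hN : 0 < N) (hL : 0 < L) (b d : ℂ)
    (v : Fin N → ℂ) (hv : ∀ i, ‖v i‖ = 1) (c : Fin L → ℂ)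
    (A : Matrix (Fin N) (Fin N) ℂ) (hA : A = b • 1 + d • Matrix.diagonal v)
    (B : Matrix (Fin N) (Fin L × Fin N) ℂ)
    (hB : B = Matrix.of fun i p =>
      ((Matrix.replicateRow Unit c) ⊗ₖ (1 : Matrix (Fin N) (Fin N) ℂ)) ((), i) p)
    (Z : Matrix (Fin N) (Fin N ⊕ Fin L × Fin N) ℂ)
    (hZ : Z = Matrix.fromCols A B) :
    ‖LinearMap.toContinuousLinearMap
        ((Matrix.toEuclideanLin Z).comp (Jmap N L))‖ ^ 2
        ≤ (L + 1 : ℝ) * ((‖b‖ + ‖d‖) ^ 2 + ∑ l, ‖c l‖ ^ 2)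
      ∧ ‖LinearMap.toContinuousLinearMap
          ((Matrix.toEuclideanLin Z).comp (Jmap N L))‖ ^ 2
          ≤ (L + 1 : ℝ) * (2 * ‖b‖ ^ 2 + 2 * ‖d‖ ^ 2 + ∑ l, ‖c l‖ ^ 2) := by
  set f := LinearMap.toContinuousLinearMap
      ((Matrix.toEuclideanLin Z).comp (Jmap N L)) with hf
  set K0 : ℝ := (‖b‖ + ‖d‖) ^ 2 + ∑ l, ‖c l‖ ^ 2 with hK0
  have hK0nn : 0 ≤ K0 := by positivity
  set K : ℝ := (L + 1 : ℝ) * K0 with hK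
  have hKnn : 0 ≤ K := by positivity
  -- entry formula
  have hfu : ∀ (u : EuclideanSpace ℂ (Fin (N + L))) (n : Fin N),
      (f u) n = (b + d * v n) * u (colIndex N L (Sum.inl n))
        + ∑ l, c l * u (colIndex N L (Sum.inr (l, n))) := by
    intro u n
    have h1 : (f u) n = ∑ j, Z n j * u (colIndex N L j) := by
      simp [hf, Matrix.toEuclideanLin_apply, Jmap, Matrix.mulVec, dotProduct, LinearMap.coe_mk, AddHom.coe_mk]
      rfl
    rw [h1, Fintype.sum_sum_type]
    congr 1
    · rw [Finset.sum_eq_single n]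
      · simp [hZ, hA, Matrix.one_apply, Matrix.diagonal_apply]
      · intro m _ hm
        simp [hZ, hA, Matrix.one_apply, Matrix.diagonal_apply, (Ne.symm hm)]
      · simp
    · rw [Fintype.sum_prod_type]
      refine Finset.sum_congr rfl fun l _ => ?_
      rw [Finset.sum_eq_single n]
      · simp [hZ, hB]
      · intro m _ hm
        simp [hZ, hB, Matrix.one_apply, (Ne.symm hm)]
      · simp
  -- row-wise Cauchy-Schwarz
  have row_bound : ∀ (u : EuclideanSpace ℂ (Fin (N + L))) (n : Fin N),
      ‖(f u) n‖ ^ 2 ≤ K0 * (‖u (colIndex N L (Sum.inl n))‖ ^ 2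
        + ∑ l, ‖u (colIndex N L (Sum.inr (l, n)))‖ ^ 2) := by
    intro u n
    set p : EuclideanSpace ℂ (Unit ⊕ Fin L) :=
      (WithLp.equiv 2 _).symm (Sum.elim (fun _ => (starRingEnd ℂ) (b + d * v n))
        (fun l => (starRingEnd ℂ) (c l))) with hp
    set q : EuclideanSpace ℂ (Unit ⊕ Fin L) :=
      (WithLp.equiv 2 _).symm (Sum.elim (fun _ => u (colIndex N L (Sum.inl n)))
        (fun l => u (colIndex N L (Sum.inr (l, n))))) with hq
    have hip : (inner ℂ p q : ℂ) = (f u) n := by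
      rw [hfu]
      simp [PiLp.inner_apply, RCLike.inner_apply, Fintype.sum_sum_type, hp, hq,
        WithLp.equiv_symm_apply, PiLp.toLp_apply]
      rw [mul_comm]
      exact congrArg _ (Finset.sum_congr rfl fun _ _ => mul_comm _ _)
    have h1 : ‖(f u) n‖ ≤ ‖p‖ * ‖q‖ := by
      rw [← hip]; exact norm_inner_le_norm p q
    have h2 : ‖(f u) n‖ ^ 2 ≤ ‖p‖ ^ 2 * ‖q‖ ^ 2 := by
      rw [← mul_pow]
      exact pow_le_pow_left₀ (norm_nonneg _) h1 2
    have hpn : ‖p‖ ^ 2 ≤ K0 := by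
      rw [eucl_norm_sq, Fintype.sum_sum_type]
      have hbd : ‖b + d * v n‖ ≤ ‖b‖ + ‖d‖ := by
        calc ‖b + d * v n‖ ≤ ‖b‖ + ‖d * v n‖ := norm_add_le _ _
          _ = ‖b‖ + ‖d‖ := by rw [norm_mul, hv n, mul_one]
      have : ∑ _x : Unit, ‖p (Sum.inl _x)‖ ^ 2 = ‖b + d * v n‖ ^ 2 := by
        simp only [hp, WithLp.equiv_symm_apply, PiLp.toLp_apply, Sum.elim_inl, Finset.sum_const,
          Finset.card_univ, Fintype.card_unit, one_smul]
        rw [RCLike.norm_conj]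
      rw [this, hK0]
      have h4 : ∑ l, ‖p (Sum.inr l)‖ ^ 2 = ∑ l, ‖c l‖ ^ 2 := by
        simp only [hp, WithLp.equiv_symm_apply, PiLp.toLp_apply, Sum.elim_inr, RCLike.norm_conj]
      rw [h4]
      have := pow_le_pow_left₀ (norm_nonneg _) hbd 2
      linarith
    have hqn : ‖q‖ ^ 2 = ‖u (colIndex N L (Sum.inl n))‖ ^ 2
        + ∑ l, ‖u (colIndex N L (Sum.inr (l, n)))‖ ^ 2 := by
      rw [eucl_norm_sq, Fintype.sum_sum_type]
      simp [hq, WithLp.equiv_symm_apply, PiLp.toLp_apply]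
    calc ‖(f u) n‖ ^ 2 ≤ ‖p‖ ^ 2 * ‖q‖ ^ 2 := h2
      _ ≤ K0 * (‖u (colIndex N L (Sum.inl n))‖ ^ 2
          + ∑ l, ‖u (colIndex N L (Sum.inr (l, n)))‖ ^ 2) := by
        rw [← hqn]
        exact mul_le_mul_of_nonneg_right hpn (by positivity)
  -- global bound
  have main : ‖f‖ ^ 2 ≤ K := by
    have hb : ∀ u : EuclideanSpace ℂ (Fin (N + L)), ‖f u‖ ≤ Real.sqrt K * ‖u‖ := by
      intro u
      have hsq : ‖f u‖ ^ 2 ≤ K * ‖u‖ ^ 2 := by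
        have h0 : ∑ n, ‖u (colIndex N L (Sum.inl n))‖ ^ 2 ≤ ‖u‖ ^ 2 := by
          rw [eucl_norm_sq]
          exact sum_comp_le (fun n : Fin N => colIndex N L (Sum.inl n)) (fun a a' h => by
            simp only [colIndex, Sum.elim_inl, Fin.mk.injEq] at h
            exact Fin.ext (by omega)) (fun k => ‖u k‖ ^ 2) (fun _ => by positivity)
        have hl : ∀ l : Fin L, ∑ n, ‖u (colIndex N L (Sum.inr (l, n)))‖ ^ 2 ≤ ‖u‖ ^ 2 := by
          intro l
          rw [eucl_norm_sq]
          exact sum_comp_le (fun n : Fin N => colIndex N L (Sum.inr (l, n)))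
            (fun a a' h => by
              simp only [colIndex, Sum.elim_inr, Fin.mk.injEq] at h
              have := l.isLt
              exact Fin.ext (by omega)) (fun k => ‖u k‖ ^ 2) (fun _ => by positivity)
        calc ‖f u‖ ^ 2 = ∑ n, ‖(f u) n‖ ^ 2 := eucl_norm_sq _
          _ ≤ ∑ n, K0 * (‖u (colIndex N L (Sum.inl n))‖ ^ 2
              + ∑ l, ‖u (colIndex N L (Sum.inr (l, n)))‖ ^ 2) :=
            Finset.sum_le_sum fun n _ => row_bound u n
          _ = K0 * ((∑ n, ‖u (colIndex N L (Sum.inl n))‖ ^ 2)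
              + ∑ l, ∑ n, ‖u (colIndex N L (Sum.inr (l, n)))‖ ^ 2) := by
            rw [← Finset.mul_sum, Finset.sum_add_distrib, Finset.sum_comm]
          _ ≤ K0 * (‖u‖ ^ 2 + L * ‖u‖ ^ 2) := by
            refine mul_le_mul_of_nonneg_left ?_ hK0nn
            have hsl : ∑ l : Fin L, ∑ n, ‖u (colIndex N L (Sum.inr (l, n)))‖ ^ 2
                ≤ ∑ _l : Fin L, ‖u‖ ^ 2 := Finset.sum_le_sum fun l _ => hl l
            simp only [Finset.sum_const, Finset.card_univ, Fintype.card_fin,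
              nsmul_eq_mul] at hsl
            linarith
          _ = K * ‖u‖ ^ 2 := by rw [hK]; ring
      have h5 : ‖f u‖ = Real.sqrt (‖f u‖ ^ 2) := by
        rw [Real.sqrt_sq (norm_nonneg _)]
      rw [h5]
      calc Real.sqrt (‖f u‖ ^ 2) ≤ Real.sqrt (K * ‖u‖ ^ 2) := Real.sqrt_le_sqrt hsq
        _ = Real.sqrt K * ‖u‖ := by
          rw [Real.sqrt_mul hKnn, Real.sqrt_sq (norm_nonneg _)]
    have hop : ‖f‖ ≤ Real.sqrt K := f.opNorm_le_bound (Real.sqrt_nonneg _) hb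
    calc ‖f‖ ^ 2 ≤ Real.sqrt K ^ 2 := pow_le_pow_left₀ (norm_nonneg _) hop 2
      _ = K := Real.sq_sqrt hKnn
  refine ⟨main, main.trans ?_⟩
  rw [hK, hK0]
  have h6 : (‖b‖ + ‖d‖) ^ 2 ≤ 2 * ‖b‖ ^ 2 + 2 * ‖d‖ ^ 2 := by nlinarith [sq_nonneg (‖b‖ - ‖d‖)]
  have hL1 : (0:ℝ) ≤ (L + 1 : ℝ) := by positivity
  exact mul_le_mul_of_nonneg_left (by linarith) hL1
end
end
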